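/- Let k ≥ 1 and let S be a set of size e ≤ k with probabilities x_s ≥ 0 summing to z ≤ e/k. Under k i.i.d. draws where each draw equals s with probability x_s, the probability that every s ∈ S occurs at least once is at least exp(-e) · (k!/(k-e)!) · ∏_{s∈S} x_s. -/

import Mathlib

open MeasureTheory ProbabilityTheory

private lemma exp_le_pow_aux (k e : ℕ) (hk : 1 ≤ k) (hek : e ≤ k) (z : ℝ)
    (hz0 : 0 ≤ z) (hze : z ≤ (e : ℝ) / (k : ℝ)) :
    Real.exp (-(e : ℝ)) ≤ (1 - z) ^ (k - e) := by
  have hkpos : (0:ℝ) < k := by exact_mod_cast hk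
  rcases eq_or_lt_of_le hek with he | he
  · subst he
    simp only [Nat.sub_self, pow_zero]
    exact Real.exp_le_one_iff.mpr (neg_nonpos.mpr (Nat.cast_nonneg e))
  · have hkel : (0:ℝ) < (k:ℝ) - e := by
      have : (e:ℝ) < k := by exact_mod_cast he
      linarith
    set a : ℝ := (e : ℝ) / ((k:ℝ) - e) with ha
    have ha0 : 0 ≤ a := by positivity
    have h1 : Real.exp (-a) ≤ 1 - (e:ℝ)/k := by
      have h2 : a + 1 ≤ Real.exp a := Real.add_one_le_exp a
      have h3 : Real.exp (-a) ≤ 1 / (1 + a) := by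
        rw [Real.exp_neg, inv_eq_one_div]
        exact one_div_le_one_div_of_le (by linarith) (by linarith)
      have h4 : 1 / (1 + a) = 1 - (e:ℝ)/k := by
        rw [ha]; field_simp; ring
      linarith
    have h5 : 1 - (e:ℝ)/k ≤ 1 - z := by linarith
    have h6 : Real.exp (-a) ≤ 1 - z := le_trans h1 h5
    have h7 : Real.exp (-a) ^ (k - e) ≤ (1 - z) ^ (k - e) :=
      pow_le_pow_left₀ (Real.exp_nonneg _) h6 _
    have h8 : Real.exp (-a) ^ (k - e) = Real.exp (-(e:ℝ)) := by
      rw [← Real.exp_nat_mul]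
      congr 1
      have hcast : ((k - e : ℕ) : ℝ) = (k:ℝ) - e := Nat.cast_sub hek
      rw [hcast, ha]
      field_simp
    linarith [h7, h8.symm.le]

theorem stmt_10 {Ω : Type*} [MeasurableSpace Ω] (μ : Measure Ω) [IsProbabilityMeasure μ]
    {ι : Type*} [Fintype ι] [mι : MeasurableSpace ι] [MeasurableSingletonClass ι]
    (k e : ℕ) (hk : 1 ≤ k) (S : Finset ι) (hcard : S.card = e) (hek : e ≤ k)
    (x : ι → ℝ) (hx : ∀ s ∈ S, 0 ≤ x s)
    (z : ℝ) (hz : z = ∑ s ∈ S, x s) (hze : z ≤ (e : ℝ) / (k : ℝ))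
    (Y : Fin k → Ω → ι) (hY : ∀ t, Measurable (Y t))
    (hindep : iIndepFun (m := fun _ => mι) Y μ)
    (hprob : ∀ t : Fin k, ∀ s ∈ S, (μ (Y t ⁻¹' {s})).toReal = x s) :
    (k.descFactorial e : ℝ) * Real.exp (-(e : ℝ)) * ∏ s ∈ S, x s ≤
      (μ {ω | ∀ s ∈ S, ∃ t, Y t ω = s}).toReal := by
  classical
  set E : Set Ω := {ω | ∀ s ∈ S, ∃ t, Y t ω = s} with hE
  -- the cell sets
  set C : (↥S ↪ Fin k) → Fin k → Set ι := fun f t =>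
    if h : ∃ s : ↥S, f s = t then {(h.choose : ι)} else (↑S : Set ι)ᶜ with hC
  have hCmeas : ∀ f t, MeasurableSet (C f t) := by
    intro f t
    by_cases h : ∃ s : ↥S, f s = t
    · simp only [hC, dif_pos h]; exact measurableSet_singleton _
    · simp only [hC, dif_neg h]; exact S.measurableSet.compl
  set A : (↥S ↪ Fin k) → Set Ω := fun f => ⋂ t, Y t ⁻¹' C f t with hA
  have hAmeas : ∀ f, MeasurableSet (A f) :=
    fun f => MeasurableSet.iInter fun t => (hCmeas f t).preimage (hY t)
  have hmeasA : ∀ f, μ (A f) = ∏ t, μ (Y t ⁻¹' C f t) :=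
    fun f => hindep.meas_iInter (fun t => ⟨C f t, hCmeas f t, rfl⟩)
  -- C at points of the range
  have hrange : ∀ (f : ↥S ↪ Fin k) (s : ↥S), C f (f s) = {(s : ι)} := by
    intro f s
    have h : ∃ s' : ↥S, f s' = f s := ⟨s, rfl⟩
    simp only [hC, dif_pos h]
    have : h.choose = s := f.injective h.choose_spec
    rw [this]
  have hznn : 0 ≤ z := hz ▸ Finset.sum_nonneg hx
  -- measure of preimage of S
  have hzS : ∀ t, (μ (Y t ⁻¹' ↑S)).toReal = z := by
    intro t
    have hU : Y t ⁻¹' ↑S = ⋃ s ∈ S, Y t ⁻¹' {s} := by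
      ext ω; simp
    rw [hU, measure_biUnion_finset ?_ (fun s _ => (measurableSet_singleton s).preimage (hY t))]
    · rw [ENNReal.toReal_sum (fun s _ => measure_ne_top μ _), hz]
      exact Finset.sum_congr rfl fun s hs => hprob t s hs
    · intro s _ s' _ hss'
      exact (Set.disjoint_singleton.mpr hss').preimage _
  have hcompl : ∀ t : Fin k, (μ (Y t ⁻¹' (↑S : Set ι)ᶜ)).toReal = 1 - z := by
    intro t
    rw [Set.preimage_compl,
      measure_compl (S.measurableSet.preimage (hY t)) (measure_ne_top μ _),
      measure_univ, ENNReal.toReal_sub_of_le prob_le_one ENNReal.one_ne_top,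
      ENNReal.toReal_one, hzS]
  -- measure of each A f
  have hcardS : Fintype.card ↥S = e := by rw [Fintype.card_coe, hcard]
  have hprodA : ∀ f, (μ (A f)).toReal = (∏ s ∈ S, x s) * (1 - z) ^ (k - e) := by
    intro f
    rw [hmeasA f, ENNReal.toReal_prod]
    have hsplit := Finset.prod_mul_prod_compl ((Finset.univ : Finset ↥S).map f)
      (fun t => (μ (Y t ⁻¹' C f t)).toReal)
    rw [← hsplit]
    congr 1
    · rw [Finset.prod_map]
      have : ∀ s : ↥S, (μ (Y (f s) ⁻¹' C f (f s))).toReal = x (s : ι) := by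
        intro s
        rw [hrange f s]
        exact hprob _ _ s.2
      rw [Finset.prod_congr rfl (fun s _ => this s)]
      exact Finset.prod_coe_sort S x
    · have hcompl_card : (((Finset.univ : Finset ↥S).map f)ᶜ).card = k - e := by
        rw [Finset.card_compl, Finset.card_map, Finset.card_univ, hcardS, Fintype.card_fin]
      rw [Finset.prod_congr rfl (fun t ht => ?_), Finset.prod_const, hcompl_card]
      have hnot : ¬ ∃ s : ↥S, f s = t := by
        intro ⟨s, hs⟩
        rw [Finset.mem_compl, Finset.mem_map] at ht
        exact ht ⟨s, Finset.mem_univ s, hs⟩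
      simp only [hC, dif_neg hnot]
      exact hcompl t
  -- disjointness
  have hdisj : (↑(Finset.univ : Finset (↥S ↪ Fin k)) : Set (↥S ↪ Fin k)).PairwiseDisjoint A := by
    intro f _ f' _ hff'
    rw [Function.onFun, Set.disjoint_left]
    intro ω hωf hωf'
    obtain ⟨s, hs⟩ : ∃ s : ↥S, f s ≠ f' s := by
      by_contra hcon
      push_neg at hcon
      exact hff' (DFunLike.ext f f' hcon)
    have h1 : Y (f s) ω ∈ C f (f s) := Set.mem_iInter.mp hωf (f s)
    rw [hrange f s] at h1
    have h1' : Y (f s) ω = (s : ι) := h1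
    have h2 : Y (f s) ω ∈ C f' (f s) := Set.mem_iInter.mp hωf' (f s)
    by_cases h : ∃ s' : ↥S, f' s' = f s
    · simp only [hC, dif_pos h] at h2
      have h2' : Y (f s) ω = (h.choose : ι) := h2
      have : (s : ι) = (h.choose : ι) := h1'.symm.trans h2'
      have hss : s = h.choose := Subtype.coe_injective this
      exact hs (h.choose_spec.symm.trans (congrArg f' hss.symm))
    · simp only [hC, dif_neg h] at h2
      rw [h1'] at h2
      exact h2 s.2
  -- inclusion
  have hsub : ∀ f, A f ⊆ E := by
    intro f ω hω s hs
    refine ⟨f ⟨s, hs⟩, ?_⟩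
    have := Set.mem_iInter.mp hω (f ⟨s, hs⟩)
    rw [hrange f ⟨s, hs⟩] at this
    exact this
  -- sum ≤ measure of E
  have hEmeas : ∑ f : ↥S ↪ Fin k, μ (A f) ≤ μ E := by
    rw [← measure_biUnion_finset hdisj (fun f _ => hAmeas f)]
    exact measure_mono (Set.iUnion₂_subset fun f _ => hsub f)
  have hcardEmb : Fintype.card (↥S ↪ Fin k) = k.descFactorial e := by
    rw [Fintype.card_embedding_eq, Fintype.card_fin, hcardS]
  have hsum : (∑ f : ↥S ↪ Fin k, μ (A f)).toReal
      = (k.descFactorial e : ℝ) * ((∏ s ∈ S, x s) * (1 - z) ^ (k - e)) := by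
    rw [ENNReal.toReal_sum (fun f _ => measure_ne_top μ _)]
    rw [Finset.sum_congr rfl (fun f _ => hprodA f), Finset.sum_const, Finset.card_univ,
      hcardEmb, nsmul_eq_mul]
  have hfinal : (∑ f : ↥S ↪ Fin k, μ (A f)).toReal ≤ (μ E).toReal :=
    ENNReal.toReal_mono (measure_ne_top μ _) hEmeas
  rw [hsum] at hfinal
  refine le_trans ?_ hfinal
  have hexp := exp_le_pow_aux k e hk hek z hznn hze
  have hxnn : 0 ≤ ∏ s ∈ S, x s := Finset.prod_nonneg hx
  have hdnn : (0:ℝ) ≤ (k.descFactorial e : ℝ) := Nat.cast_nonneg _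
  nlinarith [mul_le_mul_of_nonneg_left hexp hxnn]
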